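/- Suppose Γ is a commutative ℂ-subalgebra of an associative ℂ-algebra U, M is a U-module which decomposes as M = ⊕_χ M(χ) over characters χ : Γ → ℂ, where M(χ) = {v ∈ M : ∀ g ∈ Γ ∃ k, (g - χ(g))^k v = 0}, and dim M(χ₀) ≤ 1 for a fixed character χ₀. If every proper submodule N of M satisfies N = ⊕_χ (N ∩ M(χ)), then the sum of all submodules N with N ∩ M(χ₀) = 0 is again a submodule intersecting M(χ₀) trivially; hence if M is generated by any nonzero vector of M(χ₀), M has a unique maximal submodule among those avoiding M(χ₀), and a unique irreducible quotient N̄ with N̄(χ₀) ≠ 0. -/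

import Mathlib

/-- Abstract version of Theorem 5.4: if `M` decomposes over characters of a
commutative subalgebra `Γ`, with `dim M(χ₀) ≤ 1` and every proper submodule
decomposing compatibly, then the sum of all submodules avoiding `M(χ₀)` again
avoids `M(χ₀)`; hence if `M` is generated by a nonzero vector of `M(χ₀)`, there is
a unique greatest submodule avoiding `M(χ₀)`, it is a coatom (so the quotient is
irreducible), and the quotient has nonzero `χ₀`-component. -/
theorem unique_irreducible_with_generic_character
    {U : Type*} [Ring U] [Algebra ℂ U]
    (Γ : Subalgebra ℂ U) (_hcomm : ∀ x y : Γ, x * y = y * x)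
    {M : Type*} [AddCommGroup M] [Module U M] [Module ℂ M] [IsScalarTower ℂ U M]
    (χ₀ : Γ →ₐ[ℂ] ℂ)
    (genEig : (Γ →ₐ[ℂ] ℂ) → Set M)
    (hgenEig : ∀ χ (v : M), v ∈ genEig χ ↔
      ∀ g : Γ, ∃ k : ℕ, ((g : U) - algebraMap ℂ U (χ g)) ^ k • v = 0)
    (hdim : ∀ v ∈ genEig χ₀, ∀ w ∈ genEig χ₀, v ≠ 0 → ∃ c : ℂ, w = c • v)
    (hdecomp : ∀ N : Submodule U M, N ≠ ⊤ → ∀ v ∈ N,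
      ∃ (κ : ℕ) (χ : Fin κ → (Γ →ₐ[ℂ] ℂ)) (w : Fin κ → M),
        Function.Injective χ ∧ (∀ j, w j ∈ N ∧ w j ∈ genEig (χ j)) ∧ v = ∑ j, w j)
    (hindep : ∀ (κ : ℕ) (χ : Fin κ → (Γ →ₐ[ℂ] ℂ)) (w : Fin κ → M),
      Function.Injective χ → (∀ j, w j ∈ genEig (χ j)) → ∑ j, w j = 0 →
      ∀ j, w j = 0) :
    ((⨆ N ∈ {N : Submodule U M | ∀ v ∈ N, v ∈ genEig χ₀ → v = 0}, N :
        Submodule U M) ∈ {N : Submodule U M | ∀ v ∈ N, v ∈ genEig χ₀ → v = 0}) ∧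
    (∀ v₀ ∈ genEig χ₀, v₀ ≠ 0 → Submodule.span U {v₀} = ⊤ →
      ∃! Nmax : Submodule U M,
        (∀ v ∈ Nmax, v ∈ genEig χ₀ → v = 0) ∧
        (∀ N : Submodule U M, (∀ v ∈ N, v ∈ genEig χ₀ → v = 0) → N ≤ Nmax) ∧
        IsCoatom Nmax ∧ v₀ ∉ Nmax) := by
  classical
  set S : Set (Submodule U M) := {N | ∀ v ∈ N, v ∈ genEig χ₀ → v = 0} with hSdef
  -- basic closure properties of generalized eigenspaces
  have hzero : ∀ χ : Γ →ₐ[ℂ] ℂ, (0 : M) ∈ genEig χ := by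
    intro χ; rw [hgenEig]; intro g; exact ⟨1, by simp⟩
  have hpow : ∀ (a : U) (k m : ℕ) (v : M), a ^ k • v = 0 → a ^ (k + m) • v = 0 := by
    intro a k m v h
    rw [add_comm, pow_add, mul_smul, h, smul_zero]
  have haddEig : ∀ χ, ∀ v w : M, v ∈ genEig χ → w ∈ genEig χ → v + w ∈ genEig χ := by
    intro χ v w hv hw
    rw [hgenEig] at hv hw ⊢
    intro g
    obtain ⟨k, hk⟩ := hv g
    obtain ⟨l, hl⟩ := hw g
    refine ⟨k + l, ?_⟩
    rw [smul_add, hpow _ _ _ _ hk, add_comm k l, hpow _ _ _ _ hl, add_zero]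
  have hnegEig : ∀ χ, ∀ v : M, v ∈ genEig χ → -v ∈ genEig χ := by
    intro χ v hv
    rw [hgenEig] at hv ⊢
    intro g
    obtain ⟨k, hk⟩ := hv g
    exact ⟨k, by rw [smul_neg, hk, neg_zero]⟩
  have hsumEig : ∀ χ, ∀ {n : ℕ} (s : Finset (Fin n)) (f : Fin n → M),
      (∀ i ∈ s, f i ∈ genEig χ) → (∑ i ∈ s, f i) ∈ genEig χ := by
    intro χ n s f hf
    exact Finset.sum_induction f (· ∈ genEig χ) (haddEig χ) (hzero χ) hf
  -- the key claim : the sup avoids genEig χ₀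
  have hT : ∀ v ∈ (⨆ N ∈ S, N : Submodule U M), v ∈ genEig χ₀ → v = 0 := by
    intro v hvT hvχ
    by_contra hv
    have hne : ∀ N ∈ S, N ≠ ⊤ := by
      intro N hN htop
      exact hv (hN v (htop ▸ Submodule.mem_top) hvχ)
    have hvT' : v ∈ ⨆ (N : S), (N : Submodule U M) := by
      rwa [iSup_subtype]
    have hC : ∃ (s : Finset (Γ →ₐ[ℂ] ℂ)) (w : (Γ →ₐ[ℂ] ℂ) → M),
        (∀ χ, w χ ∈ genEig χ) ∧ w χ₀ = 0 ∧ (∀ χ ∉ s, w χ = 0) ∧ v = ∑ χ ∈ s, w χ := by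
      refine Submodule.iSup_induction (motive := fun v => ∃ (s : Finset (Γ →ₐ[ℂ] ℂ))
          (w : (Γ →ₐ[ℂ] ℂ) → M), (∀ χ, w χ ∈ genEig χ) ∧ w χ₀ = 0 ∧
          (∀ χ ∉ s, w χ = 0) ∧ v = ∑ χ ∈ s, w χ)
        (fun N : S => (N : Submodule U M)) hvT' ?_ ?_ ?_
      · rintro ⟨N, hN⟩ x hx
        obtain ⟨κ, χ, w, hinj, hw, hsum⟩ := hdecomp N (hne N hN) x hx
        refine ⟨Finset.image χ Finset.univ,
          fun χc => ∑ j ∈ Finset.univ.filter (fun j => χ j = χc), w j, ?_, ?_, ?_, ?_⟩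
        · intro χc
          refine hsumEig χc _ _ ?_
          intro j hj
          have : χ j = χc := (Finset.mem_filter.1 hj).2
          exact this ▸ (hw j).2
        · refine Finset.sum_eq_zero ?_
          intro j hj
          have hj0 : χ j = χ₀ := (Finset.mem_filter.1 hj).2
          exact hN (w j) (hw j).1 (hj0 ▸ (hw j).2)
        · intro χc hχc
          refine Finset.sum_eq_zero ?_
          intro j hj
          exact absurd (Finset.mem_image_of_mem χ (Finset.mem_univ j) :
            χ j ∈ Finset.image χ Finset.univ) (by rw [(Finset.mem_filter.1 hj).2]; exact hχc)
        · rw [hsum]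
          exact (Finset.sum_fiberwise_of_maps_to
            (fun j _ => Finset.mem_image_of_mem χ (Finset.mem_univ j)) w).symm
      · exact ⟨∅, fun _ => 0, fun χ => hzero χ, rfl, fun _ _ => rfl, by simp⟩
      · rintro x y ⟨s, w, hw1, hw2, hw3, hw4⟩ ⟨s', w', hw1', hw2', hw3', hw4'⟩
        refine ⟨s ∪ s', fun χ => w χ + w' χ, fun χ => haddEig χ _ _ (hw1 χ) (hw1' χ),
          show w χ₀ + w' χ₀ = 0 by rw [hw2, hw2', add_zero], ?_, ?_⟩
        · intro χ hχ
          show w χ + w' χ = 0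
          rw [hw3 χ (fun h => hχ (Finset.mem_union_left _ h)),
            hw3' χ (fun h => hχ (Finset.mem_union_right _ h)), add_zero]
        · rw [hw4, hw4', Finset.sum_add_distrib]
          congr 1
          · exact Finset.sum_subset Finset.subset_union_left
              (fun χ _ hχ => hw3 χ hχ)
          · exact Finset.sum_subset Finset.subset_union_right
              (fun χ _ hχ => hw3' χ hχ)
    obtain ⟨s, w, hw1, hw2, hw3, hw4⟩ := hC
    -- build the combined family and derive a contradiction via hindep
    set s' : Finset (Γ →ₐ[ℂ] ℂ) := insert χ₀ s with hs'
    set w'' : (Γ →ₐ[ℂ] ℂ) → M := fun χ => if χ = χ₀ then -v else w χ with hw''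
    have hw''mem : ∀ χ, w'' χ ∈ genEig χ := by
      intro χ
      by_cases h : χ = χ₀
      · simp only [hw'', h, if_pos rfl]
        exact hnegEig χ₀ v hvχ
      · simp only [hw'', if_neg h]
        exact hw1 χ
    have hsum0 : ∑ χ ∈ s', w'' χ = 0 := by
      have h1 : ∑ χ ∈ s', w'' χ = w'' χ₀ + ∑ χ ∈ s'.erase χ₀, w'' χ :=
        (Finset.add_sum_erase s' w'' (Finset.mem_insert_self χ₀ s)).symm
      have h2 : s'.erase χ₀ = s.erase χ₀ := Finset.erase_insert_eq_erase s χ₀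
      have h3 : ∀ χ ∈ s.erase χ₀, w'' χ = w χ := by
        intro χ hχ
        simp only [hw'', if_neg (Finset.ne_of_mem_erase hχ)]
      have h4 : ∑ χ ∈ s.erase χ₀, w χ = ∑ χ ∈ s, w χ := Finset.sum_erase s hw2
      rw [h1, h2, Finset.sum_congr rfl h3, h4, ← hw4]
      simp [hw'']
    -- enumerate s' by Fin
    have hcard : Fintype.card {x // x ∈ s'} = s'.card := Fintype.card_coe s'
    set e : {x // x ∈ s'} ≃ Fin s'.card := Fintype.equivFinOfCardEq hcard with he
    set χf : Fin s'.card → (Γ →ₐ[ℂ] ℂ) := fun i => (e.symm i : Γ →ₐ[ℂ] ℂ) with hχf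
    have hχfinj : Function.Injective χf :=
      Subtype.val_injective.comp e.symm.injective
    have hsumf : ∑ i, w'' (χf i) = 0 := by
      rw [← hsum0, ← Finset.sum_coe_sort s' w'']
      exact Fintype.sum_equiv e.symm (fun i => w'' (χf i)) (fun x => w'' (x : Γ →ₐ[ℂ] ℂ))
        (fun i => rfl) |>.symm ▸ (Equiv.sum_comp e.symm (fun x => w'' (x : Γ →ₐ[ℂ] ℂ)))
    have hall := hindep s'.card χf (fun i => w'' (χf i)) hχfinj
      (fun i => hw''mem (χf i)) hsumf
    have hχ0mem : χ₀ ∈ s' := Finset.mem_insert_self χ₀ s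
    have := hall (e ⟨χ₀, hχ0mem⟩)
    rw [hχf] at this
    simp only [Equiv.symm_apply_apply] at this
    simp only [hw'', if_pos rfl, neg_eq_zero] at this
    exact hv this
  constructor
  · exact hT
  · intro v₀ hv₀ hv₀ne hspan
    set T : Submodule U M := ⨆ N ∈ S, N with hTdef
    have hTS : T ∈ S := hT
    have hle : ∀ N ∈ S, N ≤ T := fun N hN => le_iSup₂ (f := fun N _ => N) N hN
    have hv₀T : v₀ ∉ T := fun h => hv₀ne (hT v₀ h hv₀)
    have hproper : ∀ N : Submodule U M, N ≠ ⊤ → N ∈ S := by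
      intro N hNtop v hvN hvχ
      by_contra hvne
      obtain ⟨c, hc⟩ := hdim v hvχ v₀ hv₀ hvne
      have hv₀N : v₀ ∈ N := by
        rw [hc, ← algebraMap_smul U c v]
        exact N.smul_mem _ hvN
      have : (⊤ : Submodule U M) ≤ N := by
        rw [← hspan]
        exact Submodule.span_le.2 (Set.singleton_subset_iff.2 hv₀N)
      exact hNtop (top_le_iff.1 this)
    have hcoatom : IsCoatom T := by
      constructor
      · intro h
        exact hv₀T (h ▸ Submodule.mem_top)
      · intro N hTN
        by_contra hNtop
        exact absurd (hle N (hproper N hNtop)) (not_le_of_gt hTN)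
    refine ⟨T, ⟨hTS, fun N hN => hle N hN, hcoatom, hv₀T⟩, ?_⟩
    rintro N' ⟨h1, h2, _, _⟩
    exact le_antisymm (hle N' h1) (h2 T hTS)
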